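/- Lemma 3 (acyclicity): let f : A ⊢ B be an arrow term of DS, and for i ∈ {1,2} let x_i in A and y_i in B be occurrences of the letter p_i that are linked in f. Then it is impossible that A has a subformula occurrence x₁ ∨ x₂ or x₂ ∨ x₁ and B has a subformula occurrence y₁ ∧ y₂ or y₂ ∧ y₁. -/

import Mathlib

/-! ### The category Br of Brauerian split equivalences of finite ordinals

An arrow `m ⊢ n` of `Br` is represented as a relation on `ℕ ⊕ ℕ`, where
`Sum.inl i` (with `i < m`) is the source copy `i_s` and `Sum.inr j`
(with `j < n`) is the target copy `j_t`. -/

abbrev GRel : Type := (ℕ ⊕ ℕ) → (ℕ ⊕ ℕ) → Prop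

/-- The identity arrow of `Br` on `n`: transversals `{i_s, i_t}` for `i < n`. -/
def gId (n : ℕ) : GRel := fun u v =>
  ∃ i, i < n ∧ (u = Sum.inl i ∨ u = Sum.inr i) ∧ (v = Sum.inl i ∨ v = Sum.inr i)

/-- The Brauerian split equivalence whose transversals are `{i_s, (φ i)_t}` for `i < m`. -/
def gFun (m : ℕ) (φ : ℕ → ℕ) : GRel := fun u v =>
  ∃ i, i < m ∧ (u = Sum.inl i ∨ u = Sum.inr (φ i)) ∧ (v = Sum.inl i ∨ v = Sum.inr (φ i))

/-- The block transposition exchanging the first `a` and the last `b` elements. -/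
def gSwap (a b : ℕ) : GRel :=
  gFun (a + b) (fun i => if i < a then i + b else i - a)

/-- `G Δ̂∧_{B,A}` with `a = GA`, `b = GB`: identity transversals on the stem `A`
together with caps joining the two copies of each letter occurrence of `B` in
the crown `¬B ∨ B` of the target. -/
def gDelta (a b : ℕ) : GRel := fun u v =>
  (∃ i, i < a ∧ (u = Sum.inl i ∨ u = Sum.inr i) ∧ (v = Sum.inl i ∨ v = Sum.inr i)) ∨
  (∃ j, j < b ∧ (u = Sum.inr (a + j) ∨ u = Sum.inr (a + b + j)) ∧
                (v = Sum.inr (a + j) ∨ v = Sum.inr (a + b + j)))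

/-- `G Σ̂∨_{B,A}` with `a = GA`, `b = GB`: identity transversals on the stem `A`
together with cups joining the two copies of each letter occurrence of `B` in
the crown `B ∧ ¬B` of the source. -/
def gSigma (a b : ℕ) : GRel := fun u v =>
  (∃ i, i < a ∧ (u = Sum.inl (2*b + i) ∨ u = Sum.inr i) ∧
                (v = Sum.inl (2*b + i) ∨ v = Sum.inr i)) ∨
  (∃ j, j < b ∧ (u = Sum.inl j ∨ u = Sum.inl (b + j)) ∧
                (v = Sum.inl j ∨ v = Sum.inl (b + j)))

/-- Composition `P ∗ R` in `Br`: glue along the middle copy and take the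
transitive closure, restricted to the outer copies. -/
def gComp (Pr R : GRel) : GRel := fun u v =>
  Relation.TransGen
    (fun x y : ℕ ⊕ ℕ ⊕ ℕ =>
      (∃ x' y', Sum.map id Sum.inl x' = x ∧ Sum.map id Sum.inl y' = y ∧ R x' y') ∨
      (∃ x' y', Sum.inr x' = x ∧ Sum.inr y' = y ∧ Pr x' y'))
    (Sum.map id Sum.inr u) (Sum.map id Sum.inr v)

/-- Shift a split relation by `a` on the source side and by `d` on the target side. -/
def gShift (a d : ℕ) (R : GRel) : GRel := fun u v =>
  ∃ u' v', R u' v' ∧ u = Sum.map (· + a) (· + d) u' ∧ v = Sum.map (· + a) (· + d) v'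

/-- Disjoint union of split relations: `G(f ξ g) = Gf ∪ Gg_{+GD}^{+GA}`. -/
def gPar (a d : ℕ) (R S : GRel) : GRel := fun u v => R u v ∨ gShift a d S u v
/-! ### The language L∧,∨ generated from the set `P` of letters -/

inductive Form (P : Type) : Type
  | letter : P → Form P
  | conj : Form P → Form P → Form P
  | disj : Form P → Form P → Form P

infixr:70 " ⋏ " => Form.conj
infixr:66 " ⋎ " => Form.disj

/-- The number of occurrences of letters in a formula (the object map of `G`). -/
def Form.size {P : Type} : Form P → ℕ
  | .letter _ => 1
  | .conj A B => A.size + B.size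
  | .disj A B => A.size + B.size
/-! ### Arrow terms of the free symmetric net category DS -/

inductive Term (P : Type) : Form P → Form P → Type
  | id (A : Form P) : Term P A A
  | comp {A B C : Form P} : Term P B C → Term P A B → Term P A C
  | conj {A B D E : Form P} : Term P A D → Term P B E → Term P (A ⋏ B) (D ⋏ E)
  | disj {A B D E : Form P} : Term P A D → Term P B E → Term P (A ⋎ B) (D ⋎ E)
  | bConjTo (A B C : Form P) : Term P (A ⋏ (B ⋏ C)) ((A ⋏ B) ⋏ C)
  | bConjFrom (A B C : Form P) : Term P ((A ⋏ B) ⋏ C) (A ⋏ (B ⋏ C))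
  | bDisjTo (A B C : Form P) : Term P (A ⋎ (B ⋎ C)) ((A ⋎ B) ⋎ C)
  | bDisjFrom (A B C : Form P) : Term P ((A ⋎ B) ⋎ C) (A ⋎ (B ⋎ C))
  | cConj (A B : Form P) : Term P (A ⋏ B) (B ⋏ A)
  | cDisj (A B : Form P) : Term P (B ⋎ A) (A ⋎ B)
  | d (A B C : Form P) : Term P (A ⋏ (B ⋎ C)) ((A ⋏ B) ⋎ C)

infixr:80 " ⬝ " => Term.comp
infixr:70 " ⊼ " => Term.conj
infixr:66 " ⊽ " => Term.disj

/-- The arrow `d^R_{C,B,A} : (C∨B)∧A ⊢ C∨(B∧A)`. -/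
def dR {P : Type} (C B A : Form P) : Term P ((C ⋎ B) ⋏ A) (C ⋎ (B ⋏ A)) :=
  Term.cDisj C (B ⋏ A) ⬝ ((Term.cConj A B ⊽ Term.id C) ⬝
    (Term.d A B C ⬝ ((Term.id A ⊼ Term.cDisj B C) ⬝ Term.cConj (C ⋎ B) A)))
/-! ### The equations of DS, imposed on arrow terms -/

inductive Eqv {P : Type} : ∀ {A B : Form P}, Term P A B → Term P A B → Prop
  -- equivalence and congruence
  | refl {A B : Form P} (f : Term P A B) : Eqv f f
  | symm {A B : Form P} {f g : Term P A B} : Eqv f g → Eqv g f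
  | trans {A B : Form P} {f g h : Term P A B} : Eqv f g → Eqv g h → Eqv f h
  | congComp {A B C : Form P} {g g' : Term P B C} {f f' : Term P A B} :
      Eqv g g' → Eqv f f' → Eqv (g ⬝ f) (g' ⬝ f')
  | congConj {A B D E : Form P} {f f' : Term P A D} {g g' : Term P B E} :
      Eqv f f' → Eqv g g' → Eqv (f ⊼ g) (f' ⊼ g')
  | congDisj {A B D E : Form P} {f f' : Term P A D} {g g' : Term P B E} :
      Eqv f f' → Eqv g g' → Eqv (f ⊽ g) (f' ⊽ g')
  -- (cat 1), (cat 2)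
  | catIdR {A B : Form P} (f : Term P A B) : Eqv (f ⬝ Term.id A) f
  | catIdL {A B : Form P} (f : Term P A B) : Eqv (Term.id B ⬝ f) f
  | catAssoc {A B C D : Form P} (f : Term P A B) (g : Term P B C) (h : Term P C D) :
      Eqv (h ⬝ (g ⬝ f)) ((h ⬝ g) ⬝ f)
  -- bifunctorial equations (ξ 1), (ξ 2)
  | conjOne (A B : Form P) : Eqv (Term.id A ⊼ Term.id B) (Term.id (A ⋏ B))
  | disjOne (A B : Form P) : Eqv (Term.id A ⊽ Term.id B) (Term.id (A ⋎ B))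
  | conjTwo {A₁ B₁ C₁ A₂ B₂ C₂ : Form P} (g₁ : Term P B₁ C₁) (f₁ : Term P A₁ B₁)
      (g₂ : Term P B₂ C₂) (f₂ : Term P A₂ B₂) :
      Eqv ((g₁ ⬝ f₁) ⊼ (g₂ ⬝ f₂)) ((g₁ ⊼ g₂) ⬝ (f₁ ⊼ f₂))
  | disjTwo {A₁ B₁ C₁ A₂ B₂ C₂ : Form P} (g₁ : Term P B₁ C₁) (f₁ : Term P A₁ B₁)
      (g₂ : Term P B₂ C₂) (f₂ : Term P A₂ B₂) :
      Eqv ((g₁ ⬝ f₁) ⊽ (g₂ ⬝ f₂)) ((g₁ ⊽ g₂) ⬝ (f₁ ⊽ f₂))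
  -- naturality equations
  | bConjNat {A B C D E F : Form P} (f : Term P A D) (g : Term P B E) (h : Term P C F) :
      Eqv (((f ⊼ g) ⊼ h) ⬝ Term.bConjTo A B C) (Term.bConjTo D E F ⬝ (f ⊼ (g ⊼ h)))
  | bDisjNat {A B C D E F : Form P} (f : Term P A D) (g : Term P B E) (h : Term P C F) :
      Eqv (((f ⊽ g) ⊽ h) ⬝ Term.bDisjTo A B C) (Term.bDisjTo D E F ⬝ (f ⊽ (g ⊽ h)))
  | cConjNat {A B D E : Form P} (f : Term P A D) (g : Term P B E) :
      Eqv ((g ⊼ f) ⬝ Term.cConj A B) (Term.cConj D E ⬝ (f ⊼ g))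
  | cDisjNat {A B D E : Form P} (f : Term P A D) (g : Term P B E) :
      Eqv ((g ⊽ f) ⬝ Term.cDisj B A) (Term.cDisj E D ⬝ (f ⊽ g))
  | dNat {A B C D E F : Form P} (f : Term P A D) (g : Term P B E) (h : Term P C F) :
      Eqv (((f ⊼ g) ⊽ h) ⬝ Term.d A B C) (Term.d D E F ⬝ (f ⊼ (g ⊽ h)))
  -- (b̂ξ b̂ξ)
  | bConjIso₁ (A B C : Form P) :
      Eqv (Term.bConjFrom A B C ⬝ Term.bConjTo A B C) (Term.id (A ⋏ (B ⋏ C)))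
  | bConjIso₂ (A B C : Form P) :
      Eqv (Term.bConjTo A B C ⬝ Term.bConjFrom A B C) (Term.id ((A ⋏ B) ⋏ C))
  | bDisjIso₁ (A B C : Form P) :
      Eqv (Term.bDisjFrom A B C ⬝ Term.bDisjTo A B C) (Term.id (A ⋎ (B ⋎ C)))
  | bDisjIso₂ (A B C : Form P) :
      Eqv (Term.bDisjTo A B C ⬝ Term.bDisjFrom A B C) (Term.id ((A ⋎ B) ⋎ C))
  -- (b̂ξ 5)
  | bConjPent (A B C D : Form P) :
      Eqv (Term.bConjFrom A B (C ⋏ D) ⬝ Term.bConjFrom (A ⋏ B) C D)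
        ((Term.id A ⊼ Term.bConjFrom B C D) ⬝
          (Term.bConjFrom A (B ⋏ C) D ⬝ (Term.bConjFrom A B C ⊼ Term.id D)))
  | bDisjPent (A B C D : Form P) :
      Eqv (Term.bDisjFrom A B (C ⋎ D) ⬝ Term.bDisjFrom (A ⋎ B) C D)
        ((Term.id A ⊽ Term.bDisjFrom B C D) ⬝
          (Term.bDisjFrom A (B ⋎ C) D ⬝ (Term.bDisjFrom A B C ⊽ Term.id D)))
  -- (ĉ∧ ĉ∧), (ĉ∨ ĉ∨)
  | cConjIso (A B : Form P) : Eqv (Term.cConj B A ⬝ Term.cConj A B) (Term.id (A ⋏ B))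
  | cDisjIso (A B : Form P) : Eqv (Term.cDisj A B ⬝ Term.cDisj B A) (Term.id (A ⋎ B))
  -- (b̂∧ ĉ∧), (b̂∨ ĉ∨)
  | bcConj (A B C : Form P) :
      Eqv ((Term.id B ⊼ Term.cConj C A) ⬝ (Term.bConjFrom B C A ⬝
            (Term.cConj A (B ⋏ C) ⬝ (Term.bConjFrom A B C ⬝ (Term.cConj B A ⊼ Term.id C)))))
        (Term.bConjFrom B A C)
  | bcDisj (A B C : Form P) :
      Eqv ((Term.id B ⊽ Term.cDisj A C) ⬝ (Term.bDisjFrom B C A ⬝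
            (Term.cDisj (B ⋎ C) A ⬝ (Term.bDisjFrom A B C ⬝ (Term.cDisj A B ⊽ Term.id C)))))
        (Term.bDisjFrom B A C)
  -- (d ∧), (d ∨)
  | dConj (A B C D : Form P) :
      Eqv ((Term.bConjFrom A B C ⊽ Term.id D) ⬝ Term.d (A ⋏ B) C D)
        (Term.d A (B ⋏ C) D ⬝ ((Term.id A ⊼ Term.d B C D) ⬝ Term.bConjFrom A B (C ⋎ D)))
  | dDisj (D C B A : Form P) :
      Eqv (Term.d D C (B ⋎ A) ⬝ (Term.id D ⊼ Term.bDisjFrom C B A))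
        (Term.bDisjFrom (D ⋏ C) B A ⬝ ((Term.d D C B ⊽ Term.id A) ⬝ Term.d D (C ⋎ B) A))
  -- (d b̂∧), (d b̂∨)
  | dBConj (A B C D : Form P) :
      Eqv (dR (A ⋏ B) C D ⬝ (Term.d A B C ⊼ Term.id D))
        (Term.d A B (C ⋏ D) ⬝ ((Term.id A ⊼ dR B C D) ⬝ Term.bConjFrom A (B ⋎ C) D))
  | dBDisj (D C B A : Form P) :
      Eqv ((Term.id D ⊽ Term.d C B A) ⬝ dR D C (B ⋎ A))
        (Term.bDisjFrom D (C ⋏ B) A ⬝ ((dR D C B ⊽ Term.id A) ⬝ Term.d (D ⋎ C) B A))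
/-- The functor `G` from DS to Br on arrow terms. -/
def Term.G {P : Type} : ∀ {A B : Form P}, Term P A B → GRel
  | _, _, .id A => gId A.size
  | _, _, .comp g f => gComp (Term.G g) (Term.G f)
  | _, _, @Term.conj _ A _ D _ f g => gPar A.size D.size (Term.G f) (Term.G g)
  | _, _, @Term.disj _ A _ D _ f g => gPar A.size D.size (Term.G f) (Term.G g)
  | _, _, .bConjTo A B C => gId (A.size + (B.size + C.size))
  | _, _, .bConjFrom A B C => gId (A.size + B.size + C.size)
  | _, _, .bDisjTo A B C => gId (A.size + (B.size + C.size))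
  | _, _, .bDisjFrom A B C => gId (A.size + B.size + C.size)
  | _, _, .cConj A B => gSwap A.size B.size
  | _, _, .cDisj A B => gSwap B.size A.size
  | _, _, .d A B C => gId (A.size + (B.size + C.size))
/-! ### Occurrences of letters and subformula occurrences -/

/-- The letter at the `(n+1)`-th letter-occurrence position of a formula
(`n` counted from `0`, from the left). -/
def Form.letterAt {P : Type} : Form P → ℕ → Option P
  | .letter p, 0 => some p
  | .letter _, _ + 1 => none
  | .conj A B, n => if n < A.size then A.letterAt n else B.letterAt (n - A.size)
  | .disj A B, n => if n < A.size then A.letterAt n else B.letterAt (n - A.size)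

/-- Directions for addressing subformula occurrences. -/
inductive Dir : Type
  | l
  | r
deriving DecidableEq

/-- The subformula occurrence of a formula at a given position (path). -/
def Form.subAt {P : Type} : Form P → List Dir → Option (Form P)
  | A, [] => some A
  | .conj A _, .l :: π => A.subAt π
  | .conj _ B, .r :: π => B.subAt π
  | .disj A _, .l :: π => A.subAt π
  | .disj _ B, .r :: π => B.subAt π
  | .letter _, _ :: _ => none

/-- The number of letter occurrences strictly to the left of the subformula
occurrence at a given position. -/
def Form.offsetAt {P : Type} : Form P → List Dir → ℕ
  | _, [] => 0
  | .conj A _, .l :: π => A.offsetAt π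
  | .conj A B, .r :: π => A.size + B.offsetAt π
  | .disj A _, .l :: π => A.offsetAt π
  | .disj A B, .r :: π => A.size + B.offsetAt π
  | .letter _, _ :: _ => 0

/-- The `(n+1)`-th occurrence of a letter in `A` is *linked* in `f : A ⊢ B` to the
`(m+1)`-th occurrence of the same letter in `B` when `{n_s, m_t}` is a member of
the partition corresponding to `Gf`. -/
def Linked {P : Type} {A B : Form P} (f : Term P A B) (n m : ℕ) : Prop :=
  Term.G f (Sum.inl n) (Sum.inr m)

/-! ### Auxiliary machinery for the proof of Lemma 3 -/

/-- Two letter-occurrence positions are "disjunctively separated": the least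
subformula containing both is a disjunction with one position on each side. -/
def DisjSep {P : Type} : Form P → ℕ → ℕ → Prop
  | .letter _, _, _ => False
  | .conj A B, n₁, n₂ => DisjSep A n₁ n₂ ∨
      (∃ k₁ k₂, n₁ = A.size + k₁ ∧ n₂ = A.size + k₂ ∧ DisjSep B k₁ k₂)
  | .disj A B, n₁, n₂ => DisjSep A n₁ n₂ ∨
      (∃ k₁ k₂, n₁ = A.size + k₁ ∧ n₂ = A.size + k₂ ∧ DisjSep B k₁ k₂) ∨
      (n₁ < A.size ∧ ∃ k, n₂ = A.size + k ∧ k < B.size) ∨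
      (n₂ < A.size ∧ ∃ k, n₁ = A.size + k ∧ k < B.size)

/-- Dually, "conjunctively separated". -/
def ConjSep {P : Type} : Form P → ℕ → ℕ → Prop
  | .letter _, _, _ => False
  | .disj A B, n₁, n₂ => ConjSep A n₁ n₂ ∨
      (∃ k₁ k₂, n₁ = A.size + k₁ ∧ n₂ = A.size + k₂ ∧ ConjSep B k₁ k₂)
  | .conj A B, n₁, n₂ => ConjSep A n₁ n₂ ∨
      (∃ k₁ k₂, n₁ = A.size + k₁ ∧ n₂ = A.size + k₂ ∧ ConjSep B k₁ k₂) ∨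
      (n₁ < A.size ∧ ∃ k, n₂ = A.size + k ∧ k < B.size) ∨
      (n₂ < A.size ∧ ∃ k, n₁ = A.size + k ∧ k < B.size)

lemma DisjSep.bounds {P : Type} : ∀ (A : Form P) (n₁ n₂ : ℕ),
    DisjSep A n₁ n₂ → n₁ < A.size ∧ n₂ < A.size := by
  intro A
  induction A with
  | letter p => intro n₁ n₂ h; exact absurd h id
  | conj A B ihA ihB =>
    rintro n₁ n₂ (h | ⟨k₁, k₂, rfl, rfl, h⟩)
    · have := ihA _ _ h; simp [Form.size]; omega
    · have := ihB _ _ h; simp [Form.size]; omega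
  | disj A B ihA ihB =>
    rintro n₁ n₂ (h | ⟨k₁, k₂, rfl, rfl, h⟩ | ⟨h₁, k, rfl, hk⟩ | ⟨h₁, k, rfl, hk⟩)
    · have := ihA _ _ h; simp [Form.size]; omega
    · have := ihB _ _ h; simp [Form.size]; omega
    · simp [Form.size]; omega
    · simp [Form.size]; omega

lemma ConjSep.bounds {P : Type} : ∀ (A : Form P) (n₁ n₂ : ℕ),
    ConjSep A n₁ n₂ → n₁ < A.size ∧ n₂ < A.size := by
  intro A
  induction A with
  | letter p => intro n₁ n₂ h; exact absurd h id
  | disj A B ihA ihB =>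
    rintro n₁ n₂ (h | ⟨k₁, k₂, rfl, rfl, h⟩)
    · have := ihA _ _ h; simp [Form.size]; omega
    · have := ihB _ _ h; simp [Form.size]; omega
  | conj A B ihA ihB =>
    rintro n₁ n₂ (h | ⟨k₁, k₂, rfl, rfl, h⟩ | ⟨h₁, k, rfl, hk⟩ | ⟨h₁, k, rfl, hk⟩)
    · have := ihA _ _ h; simp [Form.size]; omega
    · have := ihB _ _ h; simp [Form.size]; omega
    · simp [Form.size]; omega
    · simp [Form.size]; omega

lemma DisjSep.symm {P : Type} : ∀ (A : Form P) (n₁ n₂ : ℕ),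
    DisjSep A n₁ n₂ → DisjSep A n₂ n₁ := by
  intro A
  induction A with
  | letter p => intro n₁ n₂ h; exact absurd h id
  | conj A B ihA ihB =>
    rintro n₁ n₂ (h | ⟨k₁, k₂, rfl, rfl, h⟩)
    · exact Or.inl (ihA _ _ h)
    · exact Or.inr ⟨k₂, k₁, rfl, rfl, ihB _ _ h⟩
  | disj A B ihA ihB =>
    rintro n₁ n₂ (h | ⟨k₁, k₂, rfl, rfl, h⟩ | ⟨h₁, k, rfl, hk⟩ | ⟨h₁, k, rfl, hk⟩)
    · exact Or.inl (ihA _ _ h)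
    · exact Or.inr (Or.inl ⟨k₂, k₁, rfl, rfl, ihB _ _ h⟩)
    · exact Or.inr (Or.inr (Or.inr ⟨h₁, k, rfl, hk⟩))
    · exact Or.inr (Or.inr (Or.inl ⟨h₁, k, rfl, hk⟩))

lemma ConjSep.symm {P : Type} : ∀ (A : Form P) (n₁ n₂ : ℕ),
    ConjSep A n₁ n₂ → ConjSep A n₂ n₁ := by
  intro A
  induction A with
  | letter p => intro n₁ n₂ h; exact absurd h id
  | disj A B ihA ihB =>
    rintro n₁ n₂ (h | ⟨k₁, k₂, rfl, rfl, h⟩)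
    · exact Or.inl (ihA _ _ h)
    · exact Or.inr ⟨k₂, k₁, rfl, rfl, ihB _ _ h⟩
  | conj A B ihA ihB =>
    rintro n₁ n₂ (h | ⟨k₁, k₂, rfl, rfl, h⟩ | ⟨h₁, k, rfl, hk⟩ | ⟨h₁, k, rfl, hk⟩)
    · exact Or.inl (ihA _ _ h)
    · exact Or.inr (Or.inl ⟨k₂, k₁, rfl, rfl, ihB _ _ h⟩)
    · exact Or.inr (Or.inr (Or.inr ⟨h₁, k, rfl, hk⟩))
    · exact Or.inr (Or.inr (Or.inl ⟨h₁, k, rfl, hk⟩))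

/-- A pair of positions cannot be both disjunctively and conjunctively separated. -/
lemma sep_excl {P : Type} : ∀ (A : Form P) (n₁ n₂ : ℕ),
    DisjSep A n₁ n₂ → ConjSep A n₁ n₂ → False := by
  intro A
  induction A with
  | letter p => intro n₁ n₂ h; exact absurd h id
  | conj A B ihA ihB =>
    rintro n₁ n₂ (hd | ⟨k₁, k₂, rfl, rfl, hd⟩) hc
    · have hb := DisjSep.bounds A _ _ hd
      rcases hc with hc | ⟨k₁, k₂, h₁, h₂, hc⟩ | ⟨h₁, k, h₂, hk⟩ | ⟨h₁, k, h₂, hk⟩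
      · exact ihA _ _ hd hc
      · omega
      · omega
      · omega
    · have hb := DisjSep.bounds B _ _ hd
      rcases hc with hc | ⟨l₁, l₂, h₁, h₂, hc⟩ | ⟨h₁, l, h₂, hl⟩ | ⟨h₁, l, h₂, hl⟩
      · have := ConjSep.bounds A _ _ hc; omega
      · have e₁ : k₁ = l₁ := by omega
        have e₂ : k₂ = l₂ := by omega
        subst e₁; subst e₂; exact ihB _ _ hd hc
      · omega
      · omega
  | disj A B ihA ihB =>
    rintro n₁ n₂ (hd | ⟨k₁, k₂, rfl, rfl, hd⟩ | ⟨h₁, k, rfl, hk⟩ | ⟨h₁, k, rfl, hk⟩) hc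
    · have hb := DisjSep.bounds A _ _ hd
      rcases hc with hc | ⟨l₁, l₂, h₁, h₂, hc⟩
      · exact ihA _ _ hd hc
      · omega
    · have hb := DisjSep.bounds B _ _ hd
      rcases hc with hc | ⟨l₁, l₂, h₁, h₂, hc⟩
      · have := ConjSep.bounds A _ _ hc; omega
      · have e₁ : k₁ = l₁ := by omega
        have e₂ : k₂ = l₂ := by omega
        subst e₁; subst e₂; exact ihB _ _ hd hc
    · rcases hc with hc | ⟨l₁, l₂, h₁, h₂, hc⟩
      · have := ConjSep.bounds A _ _ hc; omega
      · omega
    · rcases hc with hc | ⟨l₁, l₂, h₁, h₂, hc⟩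
      · have := ConjSep.bounds A _ _ hc; omega
      · omega

lemma offsetAt_append {P : Type} : ∀ (π : List Dir) (A C : Form P),
    A.subAt π = some C → ∀ π', A.offsetAt (π ++ π') = A.offsetAt π + C.offsetAt π' := by
  intro π
  induction π with
  | nil =>
    intro A C h π'
    simp [Form.subAt] at h
    subst h
    simp [Form.offsetAt]
  | cons d π ih =>
    intro A C h π'
    cases A with
    | letter p => simp [Form.subAt] at h
    | conj A B =>
      cases d with
      | l => simpa [Form.offsetAt] using ih A C h π'
      | r => simp [Form.offsetAt, ih B C h π', Nat.add_assoc]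
    | disj A B =>
      cases d with
      | l => simpa [Form.offsetAt] using ih A C h π'
      | r => simp [Form.offsetAt, ih B C h π', Nat.add_assoc]

lemma subAt_disjSep {P : Type} : ∀ (π : List Dir) (A C D : Form P),
    A.subAt π = some (C ⋎ D) → ∀ i j, i < C.size → j < D.size →
    DisjSep A (A.offsetAt π + i) (A.offsetAt π + C.size + j) := by
  intro π
  induction π with
  | nil =>
    intro A C D h i j hi hj
    simp [Form.subAt] at h
    subst h
    simp only [Form.offsetAt, Nat.zero_add]
    exact Or.inr (Or.inr (Or.inl ⟨hi, j, rfl, hj⟩))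
  | cons d π ih =>
    intro A C D h i j hi hj
    cases A with
    | letter p => simp [Form.subAt] at h
    | conj A B =>
      cases d with
      | l =>
        simp only [Form.offsetAt]
        exact Or.inl (ih A C D h i j hi hj)
      | r =>
        simp only [Form.offsetAt]
        exact Or.inr ⟨B.offsetAt π + i, B.offsetAt π + C.size + j, by omega, by omega,
          ih B C D h i j hi hj⟩
    | disj A B =>
      cases d with
      | l =>
        simp only [Form.offsetAt]
        exact Or.inl (ih A C D h i j hi hj)
      | r =>
        simp only [Form.offsetAt]
        exact Or.inr (Or.inl ⟨B.offsetAt π + i, B.offsetAt π + C.size + j, by omega, by omega,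
          ih B C D h i j hi hj⟩)

lemma subAt_conjSep {P : Type} : ∀ (π : List Dir) (A C D : Form P),
    A.subAt π = some (C ⋏ D) → ∀ i j, i < C.size → j < D.size →
    ConjSep A (A.offsetAt π + i) (A.offsetAt π + C.size + j) := by
  intro π
  induction π with
  | nil =>
    intro A C D h i j hi hj
    simp [Form.subAt] at h
    subst h
    simp only [Form.offsetAt, Nat.zero_add]
    exact Or.inr (Or.inr (Or.inl ⟨hi, j, rfl, hj⟩))
  | cons d π ih =>
    intro A C D h i j hi hj
    cases A with
    | letter p => simp [Form.subAt] at h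
    | conj A B =>
      cases d with
      | l =>
        simp only [Form.offsetAt]
        exact Or.inl (ih A C D h i j hi hj)
      | r =>
        simp only [Form.offsetAt]
        exact Or.inr (Or.inl ⟨B.offsetAt π + i, B.offsetAt π + C.size + j, by omega, by omega,
          ih B C D h i j hi hj⟩)
    | disj A B =>
      cases d with
      | l =>
        simp only [Form.offsetAt]
        exact Or.inl (ih A C D h i j hi hj)
      | r =>
        simp only [Form.offsetAt]
        exact Or.inr ⟨B.offsetAt π + i, B.offsetAt π + C.size + j, by omega, by omega,
          ih B C D h i j hi hj⟩

/-- `gFun` relations are symmetric. -/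
lemma gFun_symm {m : ℕ} {φ : ℕ → ℕ} {u v : ℕ ⊕ ℕ} (h : gFun m φ u v) : gFun m φ v u := by
  obtain ⟨i, hi, hu, hv⟩ := h; exact ⟨i, hi, hv, hu⟩

lemma gComp_spec (a b c : ℕ) (φ₁ ψ₁ φ₂ ψ₂ : ℕ → ℕ) (R Pr : GRel)
    (hR : ∀ u v, R u v ↔ gFun a φ₁ u v)
    (hP : ∀ u v, Pr u v ↔ gFun b φ₂ u v)
    (h1 : ∀ i, i < a → φ₁ i < b ∧ ψ₁ (φ₁ i) = i)
    (h1' : ∀ j, j < b → ψ₁ j < a ∧ φ₁ (ψ₁ j) = j)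
    (h2 : ∀ i, i < b → φ₂ i < c ∧ ψ₂ (φ₂ i) = i)
    (h2' : ∀ j, j < c → ψ₂ j < b ∧ φ₂ (ψ₂ j) = j) :
    ∀ u v, gComp Pr R u v ↔ gFun a (fun i => φ₂ (φ₁ i)) u v := by
  classical
  set step : (ℕ ⊕ ℕ ⊕ ℕ) → (ℕ ⊕ ℕ ⊕ ℕ) → Prop := fun x y =>
      (∃ x' y', Sum.map id Sum.inl x' = x ∧ Sum.map id Sum.inl y' = y ∧ R x' y') ∨
      (∃ x' y', Sum.inr x' = x ∧ Sum.inr y' = y ∧ Pr x' y') with hstepdef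
  have hgc : ∀ u v : ℕ ⊕ ℕ, gComp Pr R u v ↔
      Relation.TransGen step (Sum.map id Sum.inr u) (Sum.map id Sum.inr v) := by
    intro u v; rfl
  let F : ℕ ⊕ ℕ ⊕ ℕ → ℕ := fun x => match x with
    | .inl n => n
    | .inr (.inl j) => ψ₁ j
    | .inr (.inr k) => ψ₁ (ψ₂ k)
  let V : ℕ ⊕ ℕ ⊕ ℕ → Prop := fun x => match x with
    | .inl n => n < a
    | .inr (.inl j) => j < b
    | .inr (.inr k) => k < c
  have hstep : ∀ x y, step x y → V x ∧ V y ∧ F x = F y := by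
    rintro x y (⟨x', y', rfl, rfl, hr⟩ | ⟨x', y', rfl, rfl, hp⟩)
    · rw [hR] at hr
      obtain ⟨i, hi, hx, hy⟩ := hr
      have hVF : ∀ z : ℕ ⊕ ℕ, (z = Sum.inl i ∨ z = Sum.inr (φ₁ i)) →
          V (Sum.map id Sum.inl z) ∧ F (Sum.map id Sum.inl z) = i := by
        rintro z (rfl | rfl)
        · exact ⟨hi, rfl⟩
        · exact ⟨(h1 i hi).1, (h1 i hi).2⟩
      obtain ⟨hv₁, hf₁⟩ := hVF x' hx
      obtain ⟨hv₂, hf₂⟩ := hVF y' hy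
      exact ⟨hv₁, hv₂, hf₁.trans hf₂.symm⟩
    · rw [hP] at hp
      obtain ⟨j, hj, hx, hy⟩ := hp
      have hVF : ∀ z : ℕ ⊕ ℕ, (z = Sum.inl j ∨ z = Sum.inr (φ₂ j)) →
          V (Sum.inr z) ∧ F (Sum.inr z) = ψ₁ j := by
        rintro z (rfl | rfl)
        · exact ⟨hj, rfl⟩
        · refine ⟨(h2 j hj).1, ?_⟩
          show ψ₁ (ψ₂ (φ₂ j)) = ψ₁ j
          rw [(h2 j hj).2]
      obtain ⟨hv₁, hf₁⟩ := hVF x' hx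
      obtain ⟨hv₂, hf₂⟩ := hVF y' hy
      exact ⟨hv₁, hv₂, hf₁.trans hf₂.symm⟩
  have htg : ∀ x y, Relation.TransGen step x y → V x ∧ V y ∧ F x = F y := by
    intro x y h
    induction h with
    | single h => exact hstep _ _ h
    | tail _ h ih =>
      obtain ⟨hx, hy, hf⟩ := hstep _ _ h
      exact ⟨ih.1, hy, ih.2.2.trans hf⟩
  -- explicit step constructors
  have sR : ∀ (z w : ℕ ⊕ ℕ), gFun a φ₁ z w →
      step (Sum.map id Sum.inl z) (Sum.map id Sum.inl w) := by
    intro z w h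
    exact Or.inl ⟨z, w, rfl, rfl, (hR z w).mpr h⟩
  have sP : ∀ (z w : ℕ ⊕ ℕ), gFun b φ₂ z w → step (Sum.inr z) (Sum.inr w) := by
    intro z w h
    exact Or.inr ⟨z, w, rfl, rfl, (hP z w).mpr h⟩
  intro u v
  rw [hgc]
  constructor
  · intro h
    obtain ⟨hVu, hVv, hF⟩ := htg _ _ h
    cases u with
    | inl n =>
      cases v with
      | inl n' =>
        have hn : n < a := hVu
        have : n = n' := hF
        subst this
        exact ⟨n, hn, Or.inl rfl, Or.inl rfl⟩
      | inr m =>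
        have hn : n < a := hVu
        have hm : m < c := hVv
        have hF' : n = ψ₁ (ψ₂ m) := hF
        refine ⟨n, hn, Or.inl rfl, Or.inr ?_⟩
        have e1 := h2' m hm
        have e2 := h1' (ψ₂ m) e1.1
        show Sum.inr m = Sum.inr (φ₂ (φ₁ n))
        rw [hF', e2.2, e1.2]
    | inr m =>
      cases v with
      | inl n =>
        have hn : n < a := hVv
        have hm : m < c := hVu
        have hF' : ψ₁ (ψ₂ m) = n := hF
        refine ⟨n, hn, Or.inr ?_, Or.inl rfl⟩
        have e1 := h2' m hm
        have e2 := h1' (ψ₂ m) e1.1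
        show Sum.inr m = Sum.inr (φ₂ (φ₁ n))
        rw [← hF', e2.2, e1.2]
      | inr m' =>
        have hm : m < c := hVu
        have hm' : m' < c := hVv
        have hF' : ψ₁ (ψ₂ m) = ψ₁ (ψ₂ m') := hF
        have e1 := h2' m hm
        have e1' := h2' m' hm'
        have e2 := h1' (ψ₂ m) e1.1
        have hmm : m = m' := by
          have := congrArg φ₁ hF'
          rw [e2.2, (h1' (ψ₂ m') e1'.1).2] at this
          have := congrArg φ₂ this
          rw [e1.2, e1'.2] at this
          exact this
        subst hmm
        refine ⟨ψ₁ (ψ₂ m), (h1' (ψ₂ m) e1.1).1, Or.inr ?_, Or.inr ?_⟩ <;>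
          · show Sum.inr m = Sum.inr (φ₂ (φ₁ (ψ₁ (ψ₂ m))))
            rw [e2.2, e1.2]
  · rintro ⟨i, hi, hu, hv⟩
    have hb := (h1 i hi).1
    have hc := (h2 (φ₁ i) hb).1
    -- chains
    have c1 : Relation.TransGen step (Sum.inl i) (Sum.inr (Sum.inr (φ₂ (φ₁ i)))) := by
      refine Relation.TransGen.head (sR (Sum.inl i) (Sum.inr (φ₁ i))
        ⟨i, hi, Or.inl rfl, Or.inr rfl⟩) (Relation.TransGen.single ?_)
      exact sP (Sum.inl (φ₁ i)) (Sum.inr (φ₂ (φ₁ i))) ⟨φ₁ i, hb, Or.inl rfl, Or.inr rfl⟩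
    have c2 : Relation.TransGen step (Sum.inr (Sum.inr (φ₂ (φ₁ i)))) (Sum.inl i) := by
      refine Relation.TransGen.head (sP (Sum.inr (φ₂ (φ₁ i))) (Sum.inl (φ₁ i))
        ⟨φ₁ i, hb, Or.inr rfl, Or.inl rfl⟩) (Relation.TransGen.single ?_)
      exact sR (Sum.inr (φ₁ i)) (Sum.inl i) ⟨i, hi, Or.inr rfl, Or.inl rfl⟩
    rcases hu with rfl | rfl <;> rcases hv with rfl | rfl
    · exact Relation.TransGen.single (sR (Sum.inl i) (Sum.inl i) ⟨i, hi, Or.inl rfl, Or.inl rfl⟩)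
    · exact c1
    · exact c2
    · exact Relation.TransGen.single (sP (Sum.inr (φ₂ (φ₁ i))) (Sum.inr (φ₂ (φ₁ i)))
        ⟨φ₁ i, hb, Or.inr rfl, Or.inr rfl⟩)

lemma gPar_spec (a b d : ℕ) (φ₁ φ₂ : ℕ → ℕ) (R S : GRel)
    (hR : ∀ u v, R u v ↔ gFun a φ₁ u v) (hS : ∀ u v, S u v ↔ gFun b φ₂ u v) :
    ∀ u v, gPar a d R S u v ↔
      gFun (a + b) (fun i => if i < a then φ₁ i else φ₂ (i - a) + d) u v := by
  intro u v
  constructor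
  · rintro (h | ⟨u', v', hs, rfl, rfl⟩)
    · obtain ⟨i, hi, hu, hv⟩ := (hR u v).mp h
      exact ⟨i, by omega, by simpa [hi] using hu, by simpa [hi] using hv⟩
    · obtain ⟨j, hj, hu, hv⟩ := (hS u' v').mp hs
      have hna : ¬ (j + a < a) := by omega
      refine ⟨j + a, by omega, ?_, ?_⟩
      · rcases hu with rfl | rfl
        · exact Or.inl (by simp)
        · exact Or.inr (by simp only [Sum.map_inr, if_neg hna, Nat.add_sub_cancel])
      · rcases hv with rfl | rfl
        · exact Or.inl (by simp)
        · exact Or.inr (by simp only [Sum.map_inr, if_neg hna, Nat.add_sub_cancel])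
  · rintro ⟨i, hi, hu, hv⟩
    by_cases hia : i < a
    · refine Or.inl ((hR u v).mpr ⟨i, hia, ?_, ?_⟩)
      · simpa [hia] using hu
      · simpa [hia] using hv
    · refine Or.inr ?_
      have hb' : i - a < b := by omega
      have e1 : Sum.inl (α := ℕ) (β := ℕ) i = Sum.map (· + a) (· + d) (Sum.inl (i - a)) := by
        simp; omega
      have e2 : Sum.inr (α := ℕ) (β := ℕ) (if i < a then φ₁ i else φ₂ (i - a) + d) =
          Sum.map (· + a) (· + d) (Sum.inr (φ₂ (i - a))) := by
        simp [if_neg hia]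
      rcases hu with rfl | rfl <;> rcases hv with rfl | rfl
      · exact ⟨Sum.inl (i - a), Sum.inl (i - a),
          (hS _ _).mpr ⟨i - a, hb', Or.inl rfl, Or.inl rfl⟩, e1, e1⟩
      · exact ⟨Sum.inl (i - a), Sum.inr (φ₂ (i - a)),
          (hS _ _).mpr ⟨i - a, hb', Or.inl rfl, Or.inr rfl⟩, e1, e2⟩
      · exact ⟨Sum.inr (φ₂ (i - a)), Sum.inl (i - a),
          (hS _ _).mpr ⟨i - a, hb', Or.inr rfl, Or.inl rfl⟩, e2, e1⟩
      · exact ⟨Sum.inr (φ₂ (i - a)), Sum.inr (φ₂ (i - a)),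
          (hS _ _).mpr ⟨i - a, hb', Or.inr rfl, Or.inr rfl⟩, e2, e2⟩

lemma disjSep_bConjTo {P : Type} (A B C : Form P) (n₁ n₂ : ℕ)
    (h : DisjSep (A ⋏ (B ⋏ C)) n₁ n₂) : DisjSep ((A ⋏ B) ⋏ C) n₁ n₂ := by
  rcases h with h | ⟨k₁, k₂, rfl, rfl, h | ⟨l₁, l₂, rfl, rfl, h⟩⟩
  · exact Or.inl (Or.inl h)
  · exact Or.inl (Or.inr ⟨k₁, k₂, rfl, rfl, h⟩)
  · exact Or.inr ⟨l₁, l₂, by simp [Form.size]; omega, by simp [Form.size]; omega, h⟩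

lemma disjSep_bConjFrom {P : Type} (A B C : Form P) (n₁ n₂ : ℕ)
    (h : DisjSep ((A ⋏ B) ⋏ C) n₁ n₂) : DisjSep (A ⋏ (B ⋏ C)) n₁ n₂ := by
  rcases h with (h | ⟨k₁, k₂, rfl, rfl, h⟩) | ⟨k₁, k₂, rfl, rfl, h⟩
  · exact Or.inl h
  · exact Or.inr ⟨k₁, k₂, rfl, rfl, Or.inl h⟩
  · exact Or.inr ⟨B.size + k₁, B.size + k₂, by simp [Form.size]; omega,
      by simp [Form.size]; omega, Or.inr ⟨k₁, k₂, rfl, rfl, h⟩⟩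

lemma disjSep_bDisjTo {P : Type} (A B C : Form P) (n₁ n₂ : ℕ)
    (h : DisjSep (A ⋎ (B ⋎ C)) n₁ n₂) : DisjSep ((A ⋎ B) ⋎ C) n₁ n₂ := by
  rcases h with h | ⟨k₁, k₂, rfl, rfl,
      h | ⟨l₁, l₂, rfl, rfl, h⟩ | ⟨h₁, l, rfl, hl⟩ | ⟨h₁, l, rfl, hl⟩⟩ |
      ⟨h₁, k, rfl, hk⟩ | ⟨h₁, k, rfl, hk⟩
  · exact Or.inl (Or.inl h)
  · exact Or.inl (Or.inr (Or.inl ⟨k₁, k₂, rfl, rfl, h⟩))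
  · exact Or.inr (Or.inl ⟨l₁, l₂, by simp [Form.size]; omega, by simp [Form.size]; omega, h⟩)
  · exact Or.inr (Or.inr (Or.inl ⟨by simp [Form.size]; omega, l,
      by simp [Form.size]; omega, hl⟩))
  · exact Or.inr (Or.inr (Or.inr ⟨by simp [Form.size]; omega, l,
      by simp [Form.size]; omega, hl⟩))
  · simp only [Form.size] at hk
    by_cases hkb : k < B.size
    · exact Or.inl (Or.inr (Or.inr (Or.inl ⟨h₁, k, rfl, hkb⟩)))
    · exact Or.inr (Or.inr (Or.inl ⟨by simp [Form.size]; omega, k - B.size,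
        by simp [Form.size]; omega, by omega⟩))
  · simp only [Form.size] at hk
    by_cases hkb : k < B.size
    · exact Or.inl (Or.inr (Or.inr (Or.inr ⟨h₁, k, rfl, hkb⟩)))
    · exact Or.inr (Or.inr (Or.inr ⟨by simp [Form.size]; omega, k - B.size,
        by simp [Form.size]; omega, by omega⟩))

lemma disjSep_bDisjFrom {P : Type} (A B C : Form P) (n₁ n₂ : ℕ)
    (h : DisjSep ((A ⋎ B) ⋎ C) n₁ n₂) : DisjSep (A ⋎ (B ⋎ C)) n₁ n₂ := by
  rcases h with (h | ⟨k₁, k₂, rfl, rfl, h⟩ | ⟨h₁, k, rfl, hk⟩ | ⟨h₁, k, rfl, hk⟩) |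
      ⟨k₁, k₂, rfl, rfl, h⟩ | ⟨h₁, k, rfl, hk⟩ | ⟨h₁, k, rfl, hk⟩
  · exact Or.inl h
  · exact Or.inr (Or.inl ⟨k₁, k₂, rfl, rfl, Or.inl h⟩)
  · exact Or.inr (Or.inr (Or.inl ⟨h₁, k, rfl, by simp [Form.size]; omega⟩))
  · exact Or.inr (Or.inr (Or.inr ⟨h₁, k, rfl, by simp [Form.size]; omega⟩))
  · exact Or.inr (Or.inl ⟨B.size + k₁, B.size + k₂, by simp [Form.size]; omega,
      by simp [Form.size]; omega, Or.inr (Or.inl ⟨k₁, k₂, rfl, rfl, h⟩)⟩)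
  · simp only [Form.size] at h₁
    by_cases hna : n₁ < A.size
    · exact Or.inr (Or.inr (Or.inl ⟨hna, B.size + k, by simp [Form.size]; omega,
        by simp [Form.size]; omega⟩))
    · exact Or.inr (Or.inl ⟨n₁ - A.size, B.size + k, by omega, by simp [Form.size]; omega,
        Or.inr (Or.inr (Or.inl ⟨by omega, k, rfl, hk⟩))⟩)
  · simp only [Form.size] at h₁
    by_cases hna : n₂ < A.size
    · exact Or.inr (Or.inr (Or.inr ⟨hna, B.size + k, by simp [Form.size]; omega,
        by simp [Form.size]; omega⟩))
    · exact Or.inr (Or.inl ⟨B.size + k, n₂ - A.size, by simp [Form.size]; omega, by omega,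
        Or.inr (Or.inr (Or.inr ⟨by omega, k, rfl, hk⟩))⟩)

lemma disjSep_d {P : Type} (A B C : Form P) (n₁ n₂ : ℕ)
    (h : DisjSep (A ⋏ (B ⋎ C)) n₁ n₂) : DisjSep ((A ⋏ B) ⋎ C) n₁ n₂ := by
  rcases h with h | ⟨k₁, k₂, rfl, rfl,
      h | ⟨l₁, l₂, rfl, rfl, h⟩ | ⟨h₁, l, rfl, hl⟩ | ⟨h₁, l, rfl, hl⟩⟩
  · exact Or.inl (Or.inl h)
  · exact Or.inl (Or.inr ⟨k₁, k₂, rfl, rfl, h⟩)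
  · exact Or.inr (Or.inl ⟨l₁, l₂, by simp [Form.size]; omega, by simp [Form.size]; omega, h⟩)
  · exact Or.inr (Or.inr (Or.inl ⟨by simp [Form.size]; omega, l,
      by simp [Form.size]; omega, hl⟩))
  · exact Or.inr (Or.inr (Or.inr ⟨by simp [Form.size]; omega, l,
      by simp [Form.size]; omega, hl⟩))

lemma disjSep_swap_conj {P : Type} (A B : Form P) (n₁ n₂ : ℕ)
    (h : DisjSep (A ⋏ B) n₁ n₂) :
    DisjSep (B ⋏ A) (if n₁ < A.size then n₁ + B.size else n₁ - A.size)
      (if n₂ < A.size then n₂ + B.size else n₂ - A.size) := by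
  rcases h with h | ⟨k₁, k₂, rfl, rfl, h⟩
  · obtain ⟨h₁, h₂⟩ := DisjSep.bounds _ _ _ h
    rw [if_pos h₁, if_pos h₂]
    exact Or.inr ⟨n₁, n₂, by omega, by omega, h⟩
  · rw [if_neg (by omega), if_neg (by omega)]
    simp only [Nat.add_sub_cancel_left]
    exact Or.inl h

lemma disjSep_swap_disj {P : Type} (B A : Form P) (n₁ n₂ : ℕ)
    (h : DisjSep (B ⋎ A) n₁ n₂) :
    DisjSep (A ⋎ B) (if n₁ < B.size then n₁ + A.size else n₁ - B.size)
      (if n₂ < B.size then n₂ + A.size else n₂ - B.size) := by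
  rcases h with h | ⟨k₁, k₂, rfl, rfl, h⟩ | ⟨h₁, k, rfl, hk⟩ | ⟨h₁, k, rfl, hk⟩
  · obtain ⟨h₁, h₂⟩ := DisjSep.bounds _ _ _ h
    rw [if_pos h₁, if_pos h₂]
    exact Or.inr (Or.inl ⟨n₁, n₂, by omega, by omega, h⟩)
  · rw [if_neg (by omega), if_neg (by omega)]
    simp only [Nat.add_sub_cancel_left]
    exact Or.inl h
  · rw [if_pos h₁, if_neg (by omega)]
    simp only [Nat.add_sub_cancel_left]
    exact Or.inr (Or.inr (Or.inr ⟨hk, n₁, by omega, h₁⟩))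
  · rw [if_neg (by omega), if_pos h₁]
    simp only [Nat.add_sub_cancel_left]
    exact Or.inr (Or.inr (Or.inl ⟨hk, n₂, by omega, h₁⟩))

/-- The graph of `Gf` is the graph of a bijection between the letter occurrences
of the source and target which preserves disjunctive separation. -/
theorem term_spec {P : Type} : ∀ {A B : Form P} (f : Term P A B),
    ∃ φ ψ : ℕ → ℕ,
      (∀ u v, f.G u v ↔ gFun A.size φ u v) ∧
      (∀ i, i < A.size → φ i < B.size ∧ ψ (φ i) = i) ∧
      (∀ j, j < B.size → ψ j < A.size ∧ φ (ψ j) = j) ∧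
      (∀ n₁ n₂, DisjSep A n₁ n₂ → DisjSep B (φ n₁) (φ n₂))
  | _, _, .id A => by
    refine ⟨fun i => i, fun i => i, ?_, fun i hi => ⟨hi, rfl⟩, fun j hj => ⟨hj, rfl⟩,
      fun n₁ n₂ h => h⟩
    intro u v
    simp only [Term.G]
    constructor <;> (rintro ⟨i, hi, hu, hv⟩; exact ⟨i, hi, hu, hv⟩)
  | _, _, .bConjTo A B C => by
    refine ⟨fun i => i, fun i => i, ?_, fun i hi => ⟨by simp [Form.size] at hi ⊢; omega, rfl⟩,
      fun j hj => ⟨by simp [Form.size] at hj ⊢; omega, rfl⟩,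
      fun n₁ n₂ h => disjSep_bConjTo A B C n₁ n₂ h⟩
    intro u v
    simp only [Term.G]
    constructor <;> (rintro ⟨i, hi, hu, hv⟩; exact ⟨i, by simp [Form.size] at hi ⊢; omega, hu, hv⟩)
  | _, _, .bConjFrom A B C => by
    refine ⟨fun i => i, fun i => i, ?_, fun i hi => ⟨by simp [Form.size] at hi ⊢; omega, rfl⟩,
      fun j hj => ⟨by simp [Form.size] at hj ⊢; omega, rfl⟩,
      fun n₁ n₂ h => disjSep_bConjFrom A B C n₁ n₂ h⟩
    intro u v
    simp only [Term.G]
    constructor <;> (rintro ⟨i, hi, hu, hv⟩; exact ⟨i, by simp [Form.size] at hi ⊢; omega, hu, hv⟩)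
  | _, _, .bDisjTo A B C => by
    refine ⟨fun i => i, fun i => i, ?_, fun i hi => ⟨by simp [Form.size] at hi ⊢; omega, rfl⟩,
      fun j hj => ⟨by simp [Form.size] at hj ⊢; omega, rfl⟩,
      fun n₁ n₂ h => disjSep_bDisjTo A B C n₁ n₂ h⟩
    intro u v
    simp only [Term.G]
    constructor <;> (rintro ⟨i, hi, hu, hv⟩; exact ⟨i, by simp [Form.size] at hi ⊢; omega, hu, hv⟩)
  | _, _, .bDisjFrom A B C => by
    refine ⟨fun i => i, fun i => i, ?_, fun i hi => ⟨by simp [Form.size] at hi ⊢; omega, rfl⟩,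
      fun j hj => ⟨by simp [Form.size] at hj ⊢; omega, rfl⟩,
      fun n₁ n₂ h => disjSep_bDisjFrom A B C n₁ n₂ h⟩
    intro u v
    simp only [Term.G]
    constructor <;> (rintro ⟨i, hi, hu, hv⟩; exact ⟨i, by simp [Form.size] at hi ⊢; omega, hu, hv⟩)
  | _, _, .d A B C => by
    refine ⟨fun i => i, fun i => i, ?_, fun i hi => ⟨by simp [Form.size] at hi ⊢; omega, rfl⟩,
      fun j hj => ⟨by simp [Form.size] at hj ⊢; omega, rfl⟩,
      fun n₁ n₂ h => disjSep_d A B C n₁ n₂ h⟩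
    intro u v
    simp only [Term.G]
    constructor <;> (rintro ⟨i, hi, hu, hv⟩; exact ⟨i, by simp [Form.size] at hi ⊢; omega, hu, hv⟩)
  | _, _, .cConj A B => by
    refine ⟨fun i => if i < A.size then i + B.size else i - A.size,
            fun j => if j < B.size then j + A.size else j - B.size, ?_, ?_, ?_,
            fun n₁ n₂ h => disjSep_swap_conj A B n₁ n₂ h⟩
    · intro u v
      simp only [Term.G, gSwap]
      constructor <;> (rintro ⟨i, hi, hu, hv⟩; exact ⟨i, by simp [Form.size] at hi ⊢; omega, hu, hv⟩)
    · intro i hi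
      simp only [Form.size] at hi ⊢
      split_ifs <;> constructor <;> omega
    · intro j hj
      simp only [Form.size] at hj ⊢
      split_ifs <;> constructor <;> omega
  | _, _, .cDisj A B => by
    refine ⟨fun i => if i < B.size then i + A.size else i - B.size,
            fun j => if j < A.size then j + B.size else j - A.size, ?_, ?_, ?_,
            fun n₁ n₂ h => disjSep_swap_disj B A n₁ n₂ h⟩
    · intro u v
      simp only [Term.G, gSwap]
      constructor <;> (rintro ⟨i, hi, hu, hv⟩; exact ⟨i, by simp [Form.size] at hi ⊢; omega, hu, hv⟩)
    · intro i hi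
      simp only [Form.size] at hi ⊢
      split_ifs <;> constructor <;> omega
    · intro j hj
      simp only [Form.size] at hj ⊢
      split_ifs <;> constructor <;> omega
  | _, _, @Term.comp _ A B C g f => by
    obtain ⟨φ₂, ψ₂, hG₂, h2, h2', pres₂⟩ := term_spec g
    obtain ⟨φ₁, ψ₁, hG₁, h1, h1', pres₁⟩ := term_spec f
    refine ⟨fun i => φ₂ (φ₁ i), fun j => ψ₁ (ψ₂ j), ?_, ?_, ?_, ?_⟩
    · intro u v
      simpa only [Term.G] using
        gComp_spec A.size B.size C.size φ₁ ψ₁ φ₂ ψ₂ f.G g.G hG₁ hG₂ h1 h1' h2 h2' u v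
    · intro i hi
      obtain ⟨hb, he⟩ := h1 i hi
      obtain ⟨hc, he'⟩ := h2 _ hb
      exact ⟨hc, by show ψ₁ (ψ₂ (φ₂ (φ₁ i))) = i; rw [he', he]⟩
    · intro j hj
      obtain ⟨hb, he⟩ := h2' j hj
      obtain ⟨ha, he'⟩ := h1' _ hb
      exact ⟨ha, by show φ₂ (φ₁ (ψ₁ (ψ₂ j))) = j; rw [he', he]⟩
    · intro n₁ n₂ h
      exact pres₂ _ _ (pres₁ _ _ h)
  | _, _, @Term.conj _ A B D E f g => by
    obtain ⟨φ₁, ψ₁, hG₁, h1, h1', pres₁⟩ := term_spec f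
    obtain ⟨φ₂, ψ₂, hG₂, h2, h2', pres₂⟩ := term_spec g
    refine ⟨fun i => if i < A.size then φ₁ i else φ₂ (i - A.size) + D.size,
            fun j => if j < D.size then ψ₁ j else ψ₂ (j - D.size) + A.size, ?_, ?_, ?_, ?_⟩
    · intro u v
      simpa only [Term.G, Form.size] using gPar_spec A.size B.size D.size φ₁ φ₂ f.G g.G hG₁ hG₂ u v
    · intro i hi
      simp only [Form.size] at hi ⊢
      by_cases h : i < A.size
      · obtain ⟨hd, he⟩ := h1 i h
        rw [if_pos h]
        exact ⟨by omega, by rw [if_pos hd]; exact he⟩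
      · obtain ⟨hd, he⟩ := h2 (i - A.size) (by omega)
        rw [if_neg h]
        refine ⟨by omega, ?_⟩
        rw [if_neg (by omega), Nat.add_sub_cancel, he]
        omega
    · intro j hj
      simp only [Form.size] at hj ⊢
      by_cases h : j < D.size
      · obtain ⟨ha, he⟩ := h1' j h
        rw [if_pos h]
        exact ⟨by omega, by rw [if_pos ha]; exact he⟩
      · obtain ⟨ha, he⟩ := h2' (j - D.size) (by omega)
        rw [if_neg h]
        refine ⟨by omega, ?_⟩
        rw [if_neg (by omega), Nat.add_sub_cancel, he]
        omega
    · rintro n₁ n₂ (h | ⟨k₁, k₂, rfl, rfl, h⟩) <;> beta_reduce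
      · obtain ⟨hb₁, hb₂⟩ := DisjSep.bounds _ _ _ h
        rw [if_pos hb₁, if_pos hb₂]
        exact Or.inl (pres₁ _ _ h)
      · rw [if_neg (by omega), if_neg (by omega)]
        simp only [Nat.add_sub_cancel_left]
        exact Or.inr ⟨φ₂ k₁, φ₂ k₂, by omega, by omega, pres₂ _ _ h⟩
  | _, _, @Term.disj _ A B D E f g => by
    obtain ⟨φ₁, ψ₁, hG₁, h1, h1', pres₁⟩ := term_spec f
    obtain ⟨φ₂, ψ₂, hG₂, h2, h2', pres₂⟩ := term_spec g
    refine ⟨fun i => if i < A.size then φ₁ i else φ₂ (i - A.size) + D.size,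
            fun j => if j < D.size then ψ₁ j else ψ₂ (j - D.size) + A.size, ?_, ?_, ?_, ?_⟩
    · intro u v
      simpa only [Term.G, Form.size] using gPar_spec A.size B.size D.size φ₁ φ₂ f.G g.G hG₁ hG₂ u v
    · intro i hi
      simp only [Form.size] at hi ⊢
      by_cases h : i < A.size
      · obtain ⟨hd, he⟩ := h1 i h
        rw [if_pos h]
        exact ⟨by omega, by rw [if_pos hd]; exact he⟩
      · obtain ⟨hd, he⟩ := h2 (i - A.size) (by omega)
        rw [if_neg h]
        refine ⟨by omega, ?_⟩
        rw [if_neg (by omega), Nat.add_sub_cancel, he]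
        omega
    · intro j hj
      simp only [Form.size] at hj ⊢
      by_cases h : j < D.size
      · obtain ⟨ha, he⟩ := h1' j h
        rw [if_pos h]
        exact ⟨by omega, by rw [if_pos ha]; exact he⟩
      · obtain ⟨ha, he⟩ := h2' (j - D.size) (by omega)
        rw [if_neg h]
        refine ⟨by omega, ?_⟩
        rw [if_neg (by omega), Nat.add_sub_cancel, he]
        omega
    · rintro n₁ n₂ (h | ⟨k₁, k₂, rfl, rfl, h⟩ | ⟨hn₁, k, rfl, hk⟩ | ⟨hn₁, k, rfl, hk⟩) <;>
          beta_reduce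
      · obtain ⟨hb₁, hb₂⟩ := DisjSep.bounds _ _ _ h
        rw [if_pos hb₁, if_pos hb₂]
        exact Or.inl (pres₁ _ _ h)
      · rw [if_neg (by omega), if_neg (by omega)]
        simp only [Nat.add_sub_cancel_left]
        exact Or.inr (Or.inl ⟨φ₂ k₁, φ₂ k₂, by omega, by omega, pres₂ _ _ h⟩)
      · rw [if_pos hn₁, if_neg (by omega)]
        simp only [Nat.add_sub_cancel_left]
        exact Or.inr (Or.inr (Or.inl ⟨(h1 n₁ hn₁).1, φ₂ k, by omega, (h2 k hk).1⟩))
      · rw [if_neg (by omega), if_pos hn₁]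
        simp only [Nat.add_sub_cancel_left]
        exact Or.inr (Or.inr (Or.inr ⟨(h1 n₂ hn₁).1, φ₂ k, by omega, (h2 k hk).1⟩))

/-- **Lemma 3** (acyclicity): let `f : A ⊢ B` be an arrow term of DS, and for
`i ∈ {1,2}` let `x_i` in `A` and `y_i` in `B` be occurrences of the letter `p_i`
that are linked in `f`. Then it is impossible that `A` has a subformula
occurrence `x₁ ∨ x₂` or `x₂ ∨ x₁` and `B` has a subformula occurrence `y₁ ∧ y₂`
or `y₂ ∧ y₁`. -/
theorem lemma_3 {P : Type} {A B : Form P} (f : Term P A B) (p₁ p₂ : P)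
    (π₁ π₂ ρ₁ ρ₂ : List Dir)
    (hx₁ : A.subAt π₁ = some (Form.letter p₁)) (hx₂ : A.subAt π₂ = some (Form.letter p₂))
    (hy₁ : B.subAt ρ₁ = some (Form.letter p₁)) (hy₂ : B.subAt ρ₂ = some (Form.letter p₂))
    (hl₁ : Linked f (A.offsetAt π₁) (B.offsetAt ρ₁))
    (hl₂ : Linked f (A.offsetAt π₂) (B.offsetAt ρ₂))
    (hA : ∃ π : List Dir,
      (A.subAt π = some (Form.letter p₁ ⋎ Form.letter p₂) ∧
        π₁ = π ++ [Dir.l] ∧ π₂ = π ++ [Dir.r]) ∨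
      (A.subAt π = some (Form.letter p₂ ⋎ Form.letter p₁) ∧
        π₂ = π ++ [Dir.l] ∧ π₁ = π ++ [Dir.r]))
    (hB : ∃ ρ : List Dir,
      (B.subAt ρ = some (Form.letter p₁ ⋏ Form.letter p₂) ∧
        ρ₁ = ρ ++ [Dir.l] ∧ ρ₂ = ρ ++ [Dir.r]) ∨
      (B.subAt ρ = some (Form.letter p₂ ⋏ Form.letter p₁) ∧
        ρ₂ = ρ ++ [Dir.l] ∧ ρ₁ = ρ ++ [Dir.r])) :
    False := by
  
  obtain ⟨φ, ψ, hG, hbij, hbij', pres⟩ := term_spec f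
  have extract : ∀ n m, Linked f n m → n < A.size ∧ φ n = m := by
    intro n m h
    rw [Linked, hG] at h
    obtain ⟨i, hi, hu, hv⟩ := h
    rcases hu with hu | hu
    · rcases hv with hv | hv
      · exact absurd hv (by simp)
      · obtain rfl : n = i := by injection hu
        obtain rfl : m = φ n := by injection hv
        exact ⟨hi, rfl⟩
    · exact absurd hu (by simp)
  have hd : DisjSep A (A.offsetAt π₁) (A.offsetAt π₂) := by
    obtain ⟨π, ⟨hs, rfl, rfl⟩ | ⟨hs, rfl, rfl⟩⟩ := hA
    · have h0 : DisjSep A (A.offsetAt π) (A.offsetAt π + 1) := by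
        simpa [Form.size] using subAt_disjSep π A (.letter p₁) (.letter p₂) hs 0 0
          (by simp [Form.size]) (by simp [Form.size])
      have e1 : A.offsetAt (π ++ [Dir.l]) = A.offsetAt π := by
        simpa [Form.offsetAt] using offsetAt_append π A _ hs [Dir.l]
      have e2 : A.offsetAt (π ++ [Dir.r]) = A.offsetAt π + 1 := by
        simpa [Form.offsetAt, Form.size] using offsetAt_append π A _ hs [Dir.r]
      rw [e1, e2]
      exact h0
    · have h0 : DisjSep A (A.offsetAt π) (A.offsetAt π + 1) := by
        simpa [Form.size] using subAt_disjSep π A (.letter p₂) (.letter p₁) hs 0 0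
          (by simp [Form.size]) (by simp [Form.size])
      have e1 : A.offsetAt (π ++ [Dir.l]) = A.offsetAt π := by
        simpa [Form.offsetAt] using offsetAt_append π A _ hs [Dir.l]
      have e2 : A.offsetAt (π ++ [Dir.r]) = A.offsetAt π + 1 := by
        simpa [Form.offsetAt, Form.size] using offsetAt_append π A _ hs [Dir.r]
      rw [e1, e2]
      exact DisjSep.symm _ _ _ h0
  have hc : ConjSep B (B.offsetAt ρ₁) (B.offsetAt ρ₂) := by
    obtain ⟨ρ, ⟨hs, rfl, rfl⟩ | ⟨hs, rfl, rfl⟩⟩ := hB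
    · have h0 : ConjSep B (B.offsetAt ρ) (B.offsetAt ρ + 1) := by
        simpa [Form.size] using subAt_conjSep ρ B (.letter p₁) (.letter p₂) hs 0 0
          (by simp [Form.size]) (by simp [Form.size])
      have e1 : B.offsetAt (ρ ++ [Dir.l]) = B.offsetAt ρ := by
        simpa [Form.offsetAt] using offsetAt_append ρ B _ hs [Dir.l]
      have e2 : B.offsetAt (ρ ++ [Dir.r]) = B.offsetAt ρ + 1 := by
        simpa [Form.offsetAt, Form.size] using offsetAt_append ρ B _ hs [Dir.r]
      rw [e1, e2]
      exact h0
    · have h0 : ConjSep B (B.offsetAt ρ) (B.offsetAt ρ + 1) := by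
        simpa [Form.size] using subAt_conjSep ρ B (.letter p₂) (.letter p₁) hs 0 0
          (by simp [Form.size]) (by simp [Form.size])
      have e1 : B.offsetAt (ρ ++ [Dir.l]) = B.offsetAt ρ := by
        simpa [Form.offsetAt] using offsetAt_append ρ B _ hs [Dir.l]
      have e2 : B.offsetAt (ρ ++ [Dir.r]) = B.offsetAt ρ + 1 := by
        simpa [Form.offsetAt, Form.size] using offsetAt_append ρ B _ hs [Dir.r]
      rw [e1, e2]
      exact ConjSep.symm _ _ _ h0
  obtain ⟨hn₁, he₁⟩ := extract _ _ hl₁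
  obtain ⟨hn₂, he₂⟩ := extract _ _ hl₂
  have hfinal := pres _ _ hd
  rw [he₁, he₂] at hfinal
  exact sep_excl B _ _ hfinal hc
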